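/- arXiv:2412.17409 — 4 statements merged into one kernel-verified Lean document; each statement's English description precedes it below -/
import Mathlib

section
/- Let X be a compact metric space, G a locally compact group acting continuously on X, and μ a Borel probability measure on X. If μ has discrete spectrum (i.e., for every continuous function f on X the orbit {g·f : g ∈ G} is precompact in L²(μ), where (g·f)(x) = f(gx)), then the product measure μ × μ on X × X also has discrete spectrum, i.e., for every continuous function F on X × X the set {g·F : g ∈ G} is precompact in L²(μ × μ), where (g·F)(x,y) = F(gx, gy). -/
open MeasureTheory Topology Pointwise

/-- A Borel probability measure `μ` on a compact metric space `X` with a continuous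
`G`-action has *discrete spectrum* if for every continuous `f : X → ℝ` the orbit
`{g·f : g ∈ G}` is precompact in `L²(μ)`, where `(g·f)(x) = f (g • x)`. -/
def HasDiscreteSpectrum (G : Type*) {X : Type*} [Group G] [TopologicalSpace G]
    [MetricSpace X] [CompactSpace X] [MeasurableSpace X] [BorelSpace X]
    [MulAction G X] [ContinuousSMul G X]
    (μ : Measure X) [IsProbabilityMeasure μ] : Prop :=
  ∀ f : C(X, ℝ),
    IsCompact (closure
      {F : Lp ℝ 2 μ | ∃ g : G,
        F = ContinuousMap.toLp 2 μ ℝ (f.comp ⟨fun x => g • x, continuous_const_smul g⟩)})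

section Aux

open Filter ENNReal NNReal

/-- A set each of whose points is within `ε` of a totally bounded set, for every `ε > 0`,
is totally bounded. -/
lemma totallyBounded_of_near {Y : Type*} [PseudoMetricSpace Y] {A : Set Y}
    (h : ∀ ε : ℝ, 0 < ε → ∃ K : Set Y, TotallyBounded K ∧ ∀ a ∈ A, ∃ k ∈ K, dist a k ≤ ε) :
    TotallyBounded A := by
  rw [Metric.totallyBounded_iff]
  intro ε hε
  obtain ⟨K, hK, hnear⟩ := h (ε / 3) (by linarith)
  obtain ⟨t, htf, hcov⟩ := Metric.totallyBounded_iff.mp hK (ε / 3) (by linarith)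
  refine ⟨t, htf, fun a ha => ?_⟩
  obtain ⟨k, hkK, hdk⟩ := hnear a ha
  have hmem := hcov hkK
  rw [Set.mem_iUnion₂] at hmem ⊢
  obtain ⟨y, hyt, hky⟩ := hmem
  rw [Metric.mem_ball] at hky
  refine ⟨y, hyt, Metric.mem_ball.mpr ?_⟩
  calc dist a y ≤ dist a k + dist k y := dist_triangle a k y
    _ < ε := by linarith

variable {X : Type*} [MetricSpace X] [CompactSpace X] [MeasurableSpace X] [BorelSpace X]

/-- The first projection as a continuous map. -/
def fstCM : C(X × X, X) := ⟨Prod.fst, continuous_fst⟩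

/-- The second projection as a continuous map. -/
def sndCM : C(X × X, X) := ⟨Prod.snd, continuous_snd⟩

variable (μ : Measure X) [IsProbabilityMeasure μ]

lemma aux_ae_fst {f f' : X → ℝ} (hf : f =ᵐ[μ] f') :
    (fun p : X × X => f p.1) =ᵐ[μ.prod μ] fun p => f' p.1 :=
  MeasureTheory.Measure.quasiMeasurePreserving_fst.ae_eq_comp hf

lemma aux_ae_snd {f f' : X → ℝ} (hf : f =ᵐ[μ] f') :
    (fun p : X × X => f p.2) =ᵐ[μ.prod μ] fun p => f' p.2 :=
  MeasureTheory.Measure.quasiMeasurePreserving_snd.ae_eq_comp hf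

lemma eLpNorm_tensor (u v : Lp ℝ 2 μ) :
    eLpNorm (fun p : X × X => u p.1 * v p.2) 2 (μ.prod μ)
      = eLpNorm (⇑u) 2 μ * eLpNorm (⇑v) 2 μ := by
  have hu : AEMeasurable (fun x => ((‖u x‖₊ : ℝ≥0∞)) ^ (2 : ℝ≥0∞).toReal) μ :=
    (Lp.aestronglyMeasurable u).enorm.pow_const _
  have hv : AEMeasurable (fun x => ((‖v x‖₊ : ℝ≥0∞)) ^ (2 : ℝ≥0∞).toReal) μ :=
    (Lp.aestronglyMeasurable v).enorm.pow_const _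
  rw [eLpNorm_eq_lintegral_rpow_enorm_toReal two_ne_zero ENNReal.ofNat_ne_top,
    eLpNorm_eq_lintegral_rpow_enorm_toReal two_ne_zero ENNReal.ofNat_ne_top,
    eLpNorm_eq_lintegral_rpow_enorm_toReal two_ne_zero ENNReal.ofNat_ne_top,
    ← ENNReal.mul_rpow_of_nonneg _ _ (by positivity)]
  congr 1
  calc ∫⁻ p, ((‖u p.1 * v p.2‖₊ : ℝ≥0∞)) ^ (2 : ℝ≥0∞).toReal ∂(μ.prod μ)
      = ∫⁻ p, (((‖u p.1‖₊ : ℝ≥0∞)) ^ (2 : ℝ≥0∞).toReal)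
          * (((‖v p.2‖₊ : ℝ≥0∞)) ^ (2 : ℝ≥0∞).toReal) ∂(μ.prod μ) := by
        refine lintegral_congr fun p => ?_
        rw [nnnorm_mul, ENNReal.coe_mul,
          ENNReal.mul_rpow_of_nonneg _ _ ENNReal.toReal_nonneg]
    _ = _ := lintegral_prod_mul hu hv

lemma memℒp_tensor (u v : Lp ℝ 2 μ) :
    MemLp (fun p : X × X => u p.1 * v p.2) 2 (μ.prod μ) := by
  constructor
  · exact ((Lp.aestronglyMeasurable u).comp_quasiMeasurePreserving
        MeasureTheory.Measure.quasiMeasurePreserving_fst).mul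
      ((Lp.aestronglyMeasurable v).comp_quasiMeasurePreserving
        MeasureTheory.Measure.quasiMeasurePreserving_snd)
  · rw [eLpNorm_tensor]
    exact ENNReal.mul_lt_top (Lp.eLpNorm_lt_top u) (Lp.eLpNorm_lt_top v)

/-- The tensor of two `L²` functions as an element of `L²` of the product. -/
noncomputable def tensorFun (u v : Lp ℝ 2 μ) : Lp ℝ 2 (μ.prod μ) :=
  (memℒp_tensor μ u v).toLp _

lemma tensor_add_left (u u' v : Lp ℝ 2 μ) :
    tensorFun μ (u + u') v
      = tensorFun μ u v + tensorFun μ u' v := by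
  unfold tensorFun
  rw [← MemLp.toLp_add]
  apply MemLp.toLp_congr
  filter_upwards [aux_ae_fst μ (Lp.coeFn_add u u')] with p hp
  simp only [hp, Pi.add_apply]
  ring

lemma tensor_smul_left (c : ℝ) (u v : Lp ℝ 2 μ) :
    tensorFun μ (c • u) v = c • tensorFun μ u v := by
  unfold tensorFun
  rw [← MemLp.toLp_const_smul]
  apply MemLp.toLp_congr
  filter_upwards [aux_ae_fst μ (Lp.coeFn_smul c u)] with p hp
  simp only [hp, Pi.smul_apply, smul_eq_mul]
  ring

lemma tensor_add_right (u v v' : Lp ℝ 2 μ) :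
    tensorFun μ u (v + v')
      = tensorFun μ u v + tensorFun μ u v' := by
  unfold tensorFun
  rw [← MemLp.toLp_add]
  apply MemLp.toLp_congr
  filter_upwards [aux_ae_snd μ (Lp.coeFn_add v v')] with p hp
  simp only [hp, Pi.add_apply]
  ring

lemma tensor_smul_right (c : ℝ) (u v : Lp ℝ 2 μ) :
    tensorFun μ u (c • v) = c • tensorFun μ u v := by
  unfold tensorFun
  rw [← MemLp.toLp_const_smul]
  apply MemLp.toLp_congr
  filter_upwards [aux_ae_snd μ (Lp.coeFn_smul c v)] with p hp
  simp only [hp, Pi.smul_apply, smul_eq_mul]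
  ring

lemma norm_tensor (u v : Lp ℝ 2 μ) :
    ‖tensorFun μ u v‖ = ‖u‖ * ‖v‖ := by
  unfold tensorFun
  rw [Lp.norm_toLp, eLpNorm_tensor, ENNReal.toReal_mul, Lp.norm_def, Lp.norm_def]

/-- The continuous bilinear "tensor product" map `L²(μ) × L²(μ) → L²(μ × μ)`. -/
noncomputable def tensorL : Lp ℝ 2 μ →L[ℝ] Lp ℝ 2 μ →L[ℝ] Lp ℝ 2 (μ.prod μ) :=
  LinearMap.mkContinuous₂
    (LinearMap.mk₂ ℝ (tensorFun μ)
      (fun u u' v => tensor_add_left μ u u' v)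
      (fun c u v => tensor_smul_left μ c u v)
      (fun u v v' => tensor_add_right μ u v v')
      (fun c u v => tensor_smul_right μ c u v))
    1 (fun u v => by rw [one_mul]; exact le_of_eq (norm_tensor μ u v))

lemma tensorL_toLp (f k : C(X, ℝ)) :
    tensorL μ (ContinuousMap.toLp 2 μ ℝ f) (ContinuousMap.toLp 2 μ ℝ k)
      = ContinuousMap.toLp 2 (μ.prod μ) ℝ (f.comp fstCM * k.comp sndCM) := by
  apply Lp.ext
  have e1 := aux_ae_fst μ (ContinuousMap.coeFn_toLp (p := 2) (𝕜 := ℝ) μ f)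
  have e2 := aux_ae_snd μ (ContinuousMap.coeFn_toLp (p := 2) (𝕜 := ℝ) μ k)
  have h1 : ⇑(tensorL μ (ContinuousMap.toLp 2 μ ℝ f) (ContinuousMap.toLp 2 μ ℝ k))
      =ᵐ[μ.prod μ] fun p : X × X =>
        (ContinuousMap.toLp 2 μ ℝ f) p.1 * (ContinuousMap.toLp 2 μ ℝ k) p.2 :=
    MemLp.coeFn_toLp (memℒp_tensor μ _ _)
  have h2 : ⇑(ContinuousMap.toLp 2 (μ.prod μ) ℝ (f.comp fstCM * k.comp sndCM))
      =ᵐ[μ.prod μ] ⇑(f.comp fstCM * k.comp sndCM) :=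
    ContinuousMap.coeFn_toLp (μ.prod μ) _
  refine (h1.trans ?_).trans h2.symm
  filter_upwards [e1, e2] with p hp1 hp2
  rw [ContinuousMap.mul_apply, ContinuousMap.comp_apply, ContinuousMap.comp_apply]
  rw [hp1, hp2]
  rfl

lemma aux_norm_toLp_le {α : Type*} [MeasurableSpace α] [MetricSpace α] [CompactSpace α]
    [BorelSpace α]
    (ν : Measure α) [IsProbabilityMeasure ν] (u : C(α, ℝ)) :
    ‖ContinuousMap.toLp 2 ν ℝ u‖ ≤ ‖u‖ := by
  refine le_trans ((ContinuousMap.toLp 2 ν ℝ).le_opNorm u) ?_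
  have h1 : ‖(ContinuousMap.toLp 2 ν ℝ : C(α, ℝ) →L[ℝ] Lp ℝ 2 ν)‖ ≤ 1 := by
    refine le_trans (ContinuousMap.toLp_norm_le ν) ?_
    simp [measureUnivNNReal, measure_univ]
  exact mul_le_of_le_one_left (norm_nonneg u) h1

section Act

variable {G X : Type*} [Group G] [TopologicalSpace G]
    [MetricSpace X] [CompactSpace X] [MulAction G X] [ContinuousSMul G X]

/-- The action of `g` as a continuous self-map of `X`. -/
def smulCM (g : G) : C(X, X) := ⟨fun x => g • x, continuous_const_smul g⟩

/-- The diagonal action of `g` as a continuous self-map of `X × X`. -/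
def smulCM₂ (g : G) : C(X × X, X × X) :=
  ⟨fun p => (g • p.1, g • p.2),
    ((continuous_const_smul g).comp continuous_fst).prodMk
      ((continuous_const_smul g).comp continuous_snd)⟩

end Act

/-- The set of "elementary tensors" in `C(X × X, ℝ)`. -/
def tensorSet (X : Type*) [MetricSpace X] [CompactSpace X] : Set C(X × X, ℝ) :=
  {S | ∃ f k : C(X, ℝ), S = f.comp fstCM * k.comp sndCM}

end Aux

set_option maxHeartbeats 1000000 in
/-- If `μ` has discrete spectrum, then `μ × μ` has discrete spectrum for the
diagonal action of `G` on `X × X`. -/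
theorem discreteSpectrum_prod
    {G X : Type*} [Group G] [TopologicalSpace G] [LocallyCompactSpace G]
    [MetricSpace X] [CompactSpace X] [MeasurableSpace X] [BorelSpace X]
    [MulAction G X] [ContinuousSMul G X]
    (μ : Measure X) [IsProbabilityMeasure μ]
    (h : HasDiscreteSpectrum G μ) :
    ∀ F : C(X × X, ℝ),
      IsCompact (closure
        {H : Lp ℝ 2 (μ.prod μ) | ∃ g : G,
          H = ContinuousMap.toLp 2 (μ.prod μ) ℝ
            (F.comp ⟨fun p => (g • p.1, g • p.2),
              by exact ((continuous_const_smul g).comp continuous_fst).prodMk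
                  ((continuous_const_smul g).comp continuous_snd)⟩)}) := by
  classical
  -- every element of the span of `T` has its full orbit inside a compact set
  have good : ∀ S : C(X × X, ℝ), S ∈ Submodule.span ℝ (tensorSet X) →
      ∃ K : Set (Lp ℝ 2 (μ.prod μ)), IsCompact K ∧
        {H : Lp ℝ 2 (μ.prod μ) | ∃ g : G,
          H = ContinuousMap.toLp 2 (μ.prod μ) ℝ (S.comp (smulCM₂ g))} ⊆ K := by
    intro S hS
    induction hS using Submodule.span_induction with
    | mem S hSmem =>
      obtain ⟨f, k, rfl⟩ := hSmem
      refine ⟨(fun q : Lp ℝ 2 μ × Lp ℝ 2 μ => tensorL μ q.1 q.2) ''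
        ((closure {u : Lp ℝ 2 μ | ∃ g : G,
            u = ContinuousMap.toLp 2 μ ℝ (f.comp (smulCM g))}) ×ˢ
         (closure {u : Lp ℝ 2 μ | ∃ g : G,
            u = ContinuousMap.toLp 2 μ ℝ (k.comp (smulCM g))})), ?_, ?_⟩
      · exact ((h f).prod (h k)).image (tensorL μ).continuous₂
      · rintro a ⟨g, rfl⟩
        refine ⟨(ContinuousMap.toLp 2 μ ℝ (f.comp (smulCM g)),
          ContinuousMap.toLp 2 μ ℝ (k.comp (smulCM g))),
          ⟨subset_closure ⟨g, rfl⟩, subset_closure ⟨g, rfl⟩⟩, ?_⟩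
        dsimp only
        rw [tensorL_toLp]
        exact congrArg _ (ContinuousMap.ext fun p => rfl)
    | zero =>
      refine ⟨{0}, isCompact_singleton, ?_⟩
      rintro a ⟨g, rfl⟩
      simp [ContinuousMap.zero_comp]
    | add x y hx hy ihx ihy =>
      obtain ⟨K₁, hK₁, hO₁⟩ := ihx
      obtain ⟨K₂, hK₂, hO₂⟩ := ihy
      refine ⟨K₁ + K₂, hK₁.add hK₂, ?_⟩
      rintro a ⟨g, rfl⟩
      rw [ContinuousMap.add_comp, map_add]
      exact Set.add_mem_add (hO₁ ⟨g, rfl⟩) (hO₂ ⟨g, rfl⟩)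
    | smul c x hx ihx =>
      obtain ⟨K, hK, hO⟩ := ihx
      refine ⟨c • K, hK.smul c, ?_⟩
      rintro a ⟨g, rfl⟩
      rw [ContinuousMap.smul_comp, _root_.map_smul]
      exact Set.smul_mem_smul_set (hO ⟨g, rfl⟩)
  -- `T` is a submonoid, so the algebra it generates is its span
  have hone : (1 : C(X × X, ℝ)) ∈ tensorSet X := ⟨1, 1, by ext p; simp [fstCM, sndCM]⟩
  have hmul : ∀ a ∈ tensorSet X, ∀ b ∈ tensorSet X, a * b ∈ tensorSet X := by
    rintro a ⟨f, k, rfl⟩ b ⟨f', k', rfl⟩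
    refine ⟨f * f', k * k', ?_⟩
    ext p
    simp [fstCM, sndCM]
    ring
  have hclT : (Submonoid.closure (tensorSet X) : Set C(X × X, ℝ)) = tensorSet X := by
    exact congrArg SetLike.coe (Submonoid.closure_eq
      (⟨⟨tensorSet X, fun {a b} ha hb => hmul a ha b hb⟩, hone⟩ : Submonoid C(X × X, ℝ)))
  have hspan : ∀ S : C(X × X, ℝ), S ∈ Algebra.adjoin ℝ (tensorSet X) → S ∈ Submodule.span ℝ (tensorSet X) := by
    intro S hS
    have h1 : S ∈ Subalgebra.toSubmodule (Algebra.adjoin ℝ (tensorSet X)) := hS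
    rwa [Algebra.adjoin_eq_span, hclT] at h1
  -- the algebra generated by `T` separates points
  have hsep : (Algebra.adjoin ℝ (tensorSet X)).SeparatesPoints := by
    rintro p q hpq
    have hor : p.1 ≠ q.1 ∨ p.2 ≠ q.2 := by
      by_contra hc
      push_neg at hc
      exact hpq (Prod.ext hc.1 hc.2)
    rcases hor with h1 | h2
    · refine ⟨_, ⟨(⟨fun x => dist x q.1, Continuous.dist continuous_id continuous_const⟩ :
          C(X, ℝ)).comp fstCM * (1 : C(X, ℝ)).comp sndCM,
          Algebra.subset_adjoin (by exact ⟨_, _, rfl⟩), rfl⟩, ?_⟩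
      simp only [ContinuousMap.mul_apply, ContinuousMap.comp_apply, ContinuousMap.one_apply,
        ContinuousMap.coe_mk, fstCM, sndCM, mul_one, dist_self]
      exact dist_ne_zero.mpr h1
    · refine ⟨_, ⟨(1 : C(X, ℝ)).comp fstCM * (⟨fun x => dist x q.2,
          Continuous.dist continuous_id continuous_const⟩ : C(X, ℝ)).comp sndCM,
          Algebra.subset_adjoin (by exact ⟨_, _, rfl⟩), rfl⟩, ?_⟩
      simp only [ContinuousMap.mul_apply, ContinuousMap.comp_apply, ContinuousMap.one_apply,
        ContinuousMap.coe_mk, fstCM, sndCM, one_mul, dist_self]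
      exact dist_ne_zero.mpr h2
  -- main argument
  intro F
  have hTB : TotallyBounded
      {H : Lp ℝ 2 (μ.prod μ) | ∃ g : G,
        H = ContinuousMap.toLp 2 (μ.prod μ) ℝ (F.comp (smulCM₂ g))} := by
    apply totallyBounded_of_near
    intro ε hε
    obtain ⟨S, hSnear⟩ := ContinuousMap.exists_mem_subalgebra_near_continuousMap_of_separatesPoints
      (Algebra.adjoin ℝ (tensorSet X)) hsep F ε hε
    obtain ⟨K, hK, hOK⟩ := good (S : C(X × X, ℝ)) (hspan _ S.2)
    refine ⟨K, hK.totallyBounded, ?_⟩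
    rintro a ⟨g, rfl⟩
    refine ⟨ContinuousMap.toLp 2 (μ.prod μ) ℝ ((S : C(X × X, ℝ)).comp (smulCM₂ g)),
      hOK ⟨g, rfl⟩, ?_⟩
    rw [dist_eq_norm, ← map_sub, ← ContinuousMap.sub_comp]
    calc ‖ContinuousMap.toLp 2 (μ.prod μ) ℝ ((F - (S : C(X × X, ℝ))).comp (smulCM₂ g))‖
        ≤ ‖(F - (S : C(X × X, ℝ))).comp (smulCM₂ g)‖ := aux_norm_toLp_le (μ.prod μ) _
      _ ≤ ‖F - (S : C(X × X, ℝ))‖ := by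
          refine (ContinuousMap.norm_le _ (norm_nonneg _)).mpr fun p => ?_
          rw [ContinuousMap.comp_apply]
          exact ContinuousMap.norm_coe_le_norm (F - (S : C(X × X, ℝ))) _
      _ ≤ ε := by rw [norm_sub_rev]; exact le_of_lt hSnear
  exact TotallyBounded.isCompact_of_isClosed hTB.closure isClosed_closure
end

section
/- Let X be a compact metric space, G a locally compact group acting continuously on X, and μ a Borel probability measure with discrete spectrum. Then μ has bounded measure-max-mean-complexity: for every ε > 0 there exists K(ε) > 0 such that for every Borel probability measure ρ on G, S_ρ(X, μ, G, ε) < K(ε), where S_ρ is the minimal number of ρ-mean-metric ε-balls needed to cover X up to μ-measure 1−ε. -/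
open MeasureTheory Topology
open scoped ENNReal NNReal

/-- A measurable selection from finitely many measurable sets covering the space. -/
lemma exists_measurable_selection' {α : Type*} [MeasurableSpace α] {n : ℕ}
    (C : Fin n → Set α) (hC : ∀ i, MeasurableSet (C i)) (hcov : ∀ a, ∃ i, a ∈ C i) :
    ∃ p : α → Fin n, Measurable p ∧ ∀ a, a ∈ C (p a) := by
  classical
  have hne : ∀ a, (Finset.univ.filter (fun i => a ∈ C i)).Nonempty := by
    intro a
    obtain ⟨i, hi⟩ := hcov a
    exact ⟨i, by simp [hi]⟩
  refine ⟨fun a => (Finset.univ.filter (fun i => a ∈ C i)).min' (hne a), ?_, ?_⟩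
  · have hpre : ∀ i : Fin n,
        (fun a => (Finset.univ.filter (fun i => a ∈ C i)).min' (hne a)) ⁻¹' {i}
          = C i ∩ ⋂ (j : Fin n), ⋂ (_ : j < i), (C j)ᶜ := by
      intro i
      ext a
      simp only [Set.mem_preimage, Set.mem_singleton_iff, Set.mem_inter_iff, Set.mem_iInter,
        Set.mem_compl_iff]
      constructor
      · intro h
        have hmem := Finset.min'_mem (Finset.univ.filter (fun i => a ∈ C i)) (hne a)
        rw [h] at hmem
        have hi : a ∈ C i := (Finset.mem_filter.1 hmem).2
        refine ⟨hi, fun j hj haj => ?_⟩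
        have : (Finset.univ.filter (fun i => a ∈ C i)).min' (hne a) ≤ j :=
          Finset.min'_le _ _ (by simp [haj])
        rw [h] at this
        exact absurd hj (not_lt.2 this)
      · rintro ⟨hi, hlt⟩
        have h1 : (Finset.univ.filter (fun i => a ∈ C i)).min' (hne a) ≤ i :=
          Finset.min'_le _ _ (by simp [hi])
        have hmem := Finset.min'_mem (Finset.univ.filter (fun i => a ∈ C i)) (hne a)
        have h2 : a ∈ C ((Finset.univ.filter (fun i => a ∈ C i)).min' (hne a)) :=
          (Finset.mem_filter.1 hmem).2
        rcases lt_or_eq_of_le h1 with h | h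
        · exact absurd h2 (hlt _ h)
        · exact h
    refine measurable_to_countable' fun i => ?_
    rw [hpre i]
    exact (hC i).inter (MeasurableSet.iInter fun j => MeasurableSet.iInter fun _ => (hC j).compl)
  · intro a
    exact (Finset.mem_filter.1
      (Finset.min'_mem (Finset.univ.filter (fun i => a ∈ C i)) (hne a))).2

/-- `L¹`-`L²` comparison for the difference of two translates of a distance function,
in terms of the distance of the corresponding `L²` elements. -/
lemma aux_lintegral_abs_le {G X : Type*} [Group G] [TopologicalSpace G]
    [MetricSpace X] [CompactSpace X] [MeasurableSpace X] [BorelSpace X]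
    [MulAction G X] [ContinuousSMul G X]
    (μ : Measure X) [IsProbabilityMeasure μ]
    (g gi : G) (z : X) (θ : ℝ)
    (F : X → C(X, ℝ))
    (hF : F = fun z => ⟨fun x => dist x z, Continuous.dist continuous_id continuous_const⟩)
    (hd : dist ((ContinuousMap.toLp 2 μ ℝ) ((F z).comp ⟨fun x => g • x, continuous_const_smul g⟩))
        ((ContinuousMap.toLp 2 μ ℝ) ((F z).comp ⟨fun x => gi • x, continuous_const_smul gi⟩)) ≤ θ) :
    ∫⁻ x, ENNReal.ofReal |dist (g • x) z - dist (gi • x) z| ∂μ ≤ ENNReal.ofReal θ := by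
  set u : C(X, ℝ) := (F z).comp ⟨fun x => g • x, continuous_const_smul g⟩ with hu
  set w : C(X, ℝ) := (F z).comp ⟨fun x => gi • x, continuous_const_smul gi⟩ with hw
  have huw : ∀ x : X, u x - w x = dist (g • x) z - dist (gi • x) z := by
    intro x; simp [hu, hw, hF]
  have h1 : (fun x => ENNReal.ofReal |dist (g • x) z - dist (gi • x) z|)
      = fun x => (‖u x - w x‖₊ : ℝ≥0∞) := by
    funext x
    rw [huw x, ← Real.enorm_eq_ofReal_abs, enorm_eq_nnnorm]
  rw [h1]
  have h2 : ∫⁻ x, (‖u x - w x‖₊ : ℝ≥0∞) ∂μ = eLpNorm (fun x => u x - w x) 1 μ := by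
    simp only [eLpNorm_one_eq_lintegral_enorm, enorm_eq_nnnorm]
  rw [h2]
  have h3 : eLpNorm (fun x => u x - w x) 1 μ ≤ eLpNorm (fun x => u x - w x) 2 μ :=
    eLpNorm_le_eLpNorm_of_exponent_le (by norm_num)
      ((u.continuous.sub w.continuous).aestronglyMeasurable)
  refine h3.trans ?_
  have hae : (⇑(ContinuousMap.toLp 2 μ ℝ u) - ⇑(ContinuousMap.toLp 2 μ ℝ w) : X → ℝ)
      =ᵐ[μ] fun x => u x - w x :=
    (ContinuousMap.coeFn_toLp (p := 2) (𝕜 := ℝ) μ u).sub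
      (ContinuousMap.coeFn_toLp (p := 2) (𝕜 := ℝ) μ w)
  have h4 : eLpNorm (fun x => u x - w x) 2 μ
      = eLpNorm (⇑(ContinuousMap.toLp 2 μ ℝ u) - ⇑(ContinuousMap.toLp 2 μ ℝ w)) 2 μ :=
    (eLpNorm_congr_ae hae).symm
  rw [h4]
  have h5 : dist ((ContinuousMap.toLp 2 μ ℝ) u) ((ContinuousMap.toLp 2 μ ℝ) w)
      = (eLpNorm (⇑(ContinuousMap.toLp 2 μ ℝ u) - ⇑(ContinuousMap.toLp 2 μ ℝ w)) 2 μ).toReal :=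
    Lp.dist_def _ _
  have h6 : eLpNorm (⇑(ContinuousMap.toLp 2 μ ℝ u) - ⇑(ContinuousMap.toLp 2 μ ℝ w)) 2 μ ≠ ⊤ := by
    rw [← eLpNorm_congr_ae (Lp.coeFn_sub (ContinuousMap.toLp 2 μ ℝ u)
      (ContinuousMap.toLp 2 μ ℝ w))]
    exact Lp.eLpNorm_ne_top _
  calc eLpNorm (⇑(ContinuousMap.toLp 2 μ ℝ u) - ⇑(ContinuousMap.toLp 2 μ ℝ w)) 2 μ
      = ENNReal.ofReal (dist ((ContinuousMap.toLp 2 μ ℝ) u) ((ContinuousMap.toLp 2 μ ℝ) w)) := by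
        rw [h5, ENNReal.ofReal_toReal h6]
    _ ≤ ENNReal.ofReal θ := ENNReal.ofReal_le_ofReal hd


private lemma card_mul_theta_eq (c a : ℝ) (hc : c ≠ 0) :
    c * (a / (64 * c)) = a / 64 := by
  field_simp

private lemma sq_div_div (a : ℝ) (ha : a ≠ 0) : a ^ 2 / 64 / (a / 8) = a / 8 := by
  field_simp
  ring

/-- If `μ` has discrete spectrum then it has bounded measure-max-mean-complexity: for
every `ε > 0` there is `K` such that for every Borel probability measure `ρ` on `G`, `X`
can be `(1−ε)`-covered in `μ`-measure by `K` balls of `d_ρ`-radius `ε`, where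
`d_ρ(x,y) = ∫_G d(gx,gy) dρ(g)`. -/
theorem bounded_measure_max_mean_complexity_of_discreteSpectrum
    {G X : Type*} [Group G] [TopologicalSpace G] [LocallyCompactSpace G]
    [MeasurableSpace G] [BorelSpace G]
    [MetricSpace X] [CompactSpace X] [MeasurableSpace X] [BorelSpace X]
    [MulAction G X] [ContinuousSMul G X]
    (μ : Measure X) [IsProbabilityMeasure μ]
    (hds : HasDiscreteSpectrum G μ) :
    ∀ ε : ℝ, 0 < ε → ∃ K : ℕ, ∀ ρ : Measure G, IsProbabilityMeasure ρ →
      ∃ c : Fin K → X,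
        μ {y : X | ∃ k, (∫ g, dist (g • c k) (g • y) ∂ρ) < ε}
          > ENNReal.ofReal (1 - ε) := by
  classical
  intro ε hε
  -- basic constants
  set ε₀ : ℝ := min ε (1/2) with hε₀def
  have hε₀ : 0 < ε₀ := lt_min hε (by norm_num)
  have hε₀ε : ε₀ ≤ ε := min_le_left _ _
  have hε₀half : ε₀ ≤ 1/2 := min_le_right _ _
  set η : ℝ := ε₀ / 16 with hηdef
  have hη : 0 < η := by positivity
  -- X is nonempty
  have hXne : Nonempty X := by
    by_contra h
    rw [not_nonempty_iff] at h
    have h1 : μ Set.univ = 1 := measure_univ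
    rw [Set.univ_eq_empty_iff.2 h, measure_empty] at h1
    exact zero_ne_one h1
  obtain ⟨x₀⟩ := hXne
  -- an η-net of X
  obtain ⟨Z, hZ⟩ : ∃ Z : Finset X, Set.univ ⊆ ⋃ z ∈ Z, Metric.ball z η := by
    obtain ⟨Z, hZ⟩ := isCompact_univ.elim_finite_subcover (fun z : X => Metric.ball z η)
      (fun z => Metric.isOpen_ball) (fun x _ => Set.mem_iUnion.2 ⟨x, Metric.mem_ball_self hη⟩)
    exact ⟨Z, hZ⟩
  have hZnet : ∀ x : X, ∃ z ∈ Z, dist x z < η := by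
    intro x
    obtain ⟨z, hz, hxz⟩ := Set.mem_iUnion₂.1 (hZ (Set.mem_univ x))
    exact ⟨z, hz, hxz⟩
  have hZcard : 0 < (Z.card : ℝ) := by
    obtain ⟨z, hz, -⟩ := hZnet x₀
    exact_mod_cast Finset.card_pos.2 ⟨z, hz⟩
  set θ : ℝ := ε₀ ^ 2 / (64 * Z.card) with hθdef
  have hθ : 0 < θ := by positivity
  -- the test functions
  set F : X → C(X, ℝ) :=
    fun z => ⟨fun x => dist x z, Continuous.dist continuous_id continuous_const⟩ with hF
  -- the orbit map into (L²)^Z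
  set Φ : G → (Z → Lp ℝ 2 μ) := fun g z =>
    ContinuousMap.toLp 2 μ ℝ ((F z).comp ⟨fun x => g • x, continuous_const_smul g⟩) with hΦ
  have hΦcont : Continuous Φ := by
    rw [hΦ]
    refine continuous_pi fun z => ?_
    have h1 : Continuous fun g : G =>
        (ContinuousMap.curry ⟨fun p : G × X => p.1 • p.2, continuous_smul⟩ g : C(X, X)) :=
      (ContinuousMap.curry _).continuous
    have h2 : ∀ g : G, (⟨fun x => g • x, continuous_const_smul g⟩ : C(X, X))
        = ContinuousMap.curry ⟨fun p : G × X => p.1 • p.2, continuous_smul⟩ g := by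
      intro g; ext x; rfl
    have h3 : Continuous fun g : G =>
        (F z).comp (⟨fun x => g • x, continuous_const_smul g⟩ : C(X, X)) := by
      simp only [h2]
      exact (ContinuousMap.continuous_postcomp (F z)).comp h1
    exact (ContinuousMap.toLp 2 μ ℝ (E := ℝ)).continuous.comp h3
  -- total boundedness of the range of Φ, from discrete spectrum
  have htb : TotallyBounded (Set.range Φ) := by
    have hsub : Set.range Φ ⊆ Set.univ.pi fun z : Z =>
        closure {Fn : Lp ℝ 2 μ | ∃ g : G,
          Fn = ContinuousMap.toLp 2 μ ℝ
            ((F z).comp ⟨fun x => g • x, continuous_const_smul g⟩)} := by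
      rintro _ ⟨g, rfl⟩ z _
      exact subset_closure ⟨g, rfl⟩
    exact (isCompact_univ_pi fun z : Z => hds (F z)).totallyBounded.subset hsub
  obtain ⟨t, hts, htfin, htcov⟩ := (totallyBounded_iff_subset.1 htb)
    {p | dist p.1 p.2 < θ} (Metric.dist_mem_uniformity hθ)
  -- index the finite θ-net by Fin n, with representatives g' i in G
  set n : ℕ := htfin.toFinset.card with hn
  have he : ∀ i : Fin n, (htfin.toFinset.equivFin.symm i : Z → Lp ℝ 2 μ) ∈ Set.range Φ := by
    intro i
    exact hts (htfin.mem_toFinset.1 (htfin.toFinset.equivFin.symm i).2)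
  set g' : Fin n → G := fun i => (he i).choose with hg'
  have hg'spec : ∀ i, Φ (g' i) = (htfin.toFinset.equivFin.symm i : Z → Lp ℝ 2 μ) :=
    fun i => (he i).choose_spec
  have hcov : ∀ g : G, ∃ i, dist (Φ g) (Φ (g' i)) ≤ θ := by
    intro g
    obtain ⟨v, hv, hd⟩ := Set.mem_iUnion₂.1 (htcov ⟨g, rfl⟩)
    refine ⟨htfin.toFinset.equivFin ⟨v, htfin.mem_toFinset.2 hv⟩, ?_⟩
    rw [hg'spec, Equiv.symm_apply_apply]
    exact le_of_lt hd
  -- measurable selection of a net representative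
  obtain ⟨p, hpmeas, hp⟩ := exists_measurable_selection'
    (fun i : Fin n => {g : G | dist (Φ g) (Φ (g' i)) ≤ θ})
    (fun i => (isClosed_le (Continuous.dist hΦcont continuous_const) continuous_const).measurableSet)
    hcov
  -- the comparison pseudometric D and the error functions a
  set D : X → X → ℝ := fun x y => ∑ i : Fin n, dist (g' i • x) (g' i • y) with hD
  have hDnonneg : ∀ x y, 0 ≤ D x y := fun x y => Finset.sum_nonneg fun i _ => dist_nonneg
  have hDsymm : ∀ x y, D x y = D y x := by
    intro x y
    exact Finset.sum_congr rfl fun i _ => dist_comm _ _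
  have hDtri : ∀ x y w : X, D x y ≤ D x w + D w y := by
    intro x y w
    rw [hD, ← Finset.sum_add_distrib]
    exact Finset.sum_le_sum fun i _ => dist_triangle _ _ _
  have hDle : ∀ (i : Fin n) (x y : X), dist (g' i • x) (g' i • y) ≤ D x y := by
    intro i x y
    exact Finset.single_le_sum (f := fun i => dist (g' i • x) (g' i • y))
      (fun i _ => dist_nonneg) (Finset.mem_univ i)
  set a : X → G → ℝ := fun x g => ∑ i : Fin n,
    if p g = i then (∑ z ∈ Z, |dist (g • x) z - dist (g' i • x) z|) else 0 with ha
  have ha_eq : ∀ x g, a x g = ∑ z ∈ Z, |dist (g • x) z - dist (g' (p g) • x) z| := by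
    intro x g
    rw [ha]
    simp [Finset.sum_ite_eq, Finset.mem_univ]
  have ha_nonneg : ∀ x g, 0 ≤ a x g := by
    intro x g
    rw [ha_eq]
    exact Finset.sum_nonneg fun z _ => abs_nonneg _
  -- the key pointwise inequality
  have hkey : ∀ (g : G) (x y : X),
      dist (g • x) (g • y) ≤ (D x y + 2 * η) + (a x g + a y g) := by
    intro g x y
    obtain ⟨z, hz, hzy⟩ := hZnet (g • y)
    set i : Fin n := p g with hi
    have e1 : dist (g • x) (g • y) ≤ dist (g • x) z + dist z (g • y) := dist_triangle _ _ _
    have e2 : dist (g • x) z - dist (g • y) z ≤ |dist (g • x) z - dist (g • y) z| :=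
      le_abs_self _
    have e3 : |dist (g • x) z - dist (g • y) z|
        ≤ |dist (g' i • x) z - dist (g' i • y) z|
          + |dist (g • x) z - dist (g' i • x) z| + |dist (g • y) z - dist (g' i • y) z| := by
      have h : dist (g • x) z - dist (g • y) z
          = (dist (g • x) z - dist (g' i • x) z) + (dist (g' i • x) z - dist (g' i • y) z)
            + (dist (g' i • y) z - dist (g • y) z) := by ring
      rw [h]
      have h1 := abs_add_le ((dist (g • x) z - dist (g' i • x) z)
        + (dist (g' i • x) z - dist (g' i • y) z)) (dist (g' i • y) z - dist (g • y) z)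
      have h2 := abs_add_le (dist (g • x) z - dist (g' i • x) z)
        (dist (g' i • x) z - dist (g' i • y) z)
      have h3 : |dist (g' i • y) z - dist (g • y) z| = |dist (g • y) z - dist (g' i • y) z| :=
        abs_sub_comm _ _
      linarith
    have e4 : |dist (g' i • x) z - dist (g' i • y) z| ≤ dist (g' i • x) (g' i • y) :=
      abs_dist_sub_le _ _ _
    have e5 : dist (g' i • x) (g' i • y) ≤ D x y := hDle i x y
    have e6 : |dist (g • x) z - dist (g' i • x) z| ≤ a x g := by
      rw [ha_eq]
      exact Finset.single_le_sum (f := fun z => |dist (g • x) z - dist (g' (p g) • x) z|)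
        (fun z _ => abs_nonneg _) hz
    have e7 : |dist (g • y) z - dist (g' i • y) z| ≤ a y g := by
      rw [ha_eq]
      exact Finset.single_le_sum (f := fun z => |dist (g • y) z - dist (g' (p g) • y) z|)
        (fun z _ => abs_nonneg _) hz
    have e8 : dist z (g • y) < η := by rw [dist_comm]; exact hzy
    have e9 : dist (g • y) z < η := hzy
    linarith
  -- joint measurability of a
  have hameas : Measurable fun q : X × G => a q.1 q.2 := by
    rw [ha]
    refine Finset.measurable_sum _ fun i _ => ?_
    have hset : MeasurableSet {q : X × G | p q.2 = i} :=
      measurable_snd (hpmeas (measurableSet_singleton i))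
    refine Measurable.ite hset ?_ measurable_const
    have : Continuous fun q : X × G => ∑ z ∈ Z, |dist (q.2 • q.1) z - dist (g' i • q.1) z| := by
      refine continuous_finset_sum _ fun z _ => ?_
      have hc1 : Continuous fun q : X × G => q.2 • q.1 :=
        continuous_smul.comp (continuous_snd.prodMk continuous_fst)
      have hc2 : Continuous fun q : X × G => g' i • q.1 :=
        (continuous_const_smul (g' i)).comp continuous_fst
      exact ((hc1.dist continuous_const).sub (hc2.dist continuous_const)).abs
    exact this.measurable
  -- per-g integral bound
  have hag : ∀ g : G, ∫⁻ x, ENNReal.ofReal (a x g) ∂μ ≤ ENNReal.ofReal (ε₀ ^ 2 / 64) := by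
    intro g
    have h1 : ∀ x, ENNReal.ofReal (a x g)
        = ∑ z ∈ Z, ENNReal.ofReal |dist (g • x) z - dist (g' (p g) • x) z| := by
      intro x
      rw [ha_eq]
      exact ENNReal.ofReal_sum_of_nonneg (fun z _ => abs_nonneg _)
    calc ∫⁻ x, ENNReal.ofReal (a x g) ∂μ
        = ∫⁻ x, ∑ z ∈ Z, ENNReal.ofReal |dist (g • x) z - dist (g' (p g) • x) z| ∂μ := by
          exact lintegral_congr h1
      _ = ∑ z ∈ Z, ∫⁻ x, ENNReal.ofReal |dist (g • x) z - dist (g' (p g) • x) z| ∂μ := by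
          refine lintegral_finset_sum _ fun z _ => ?_
          have hc1 : Continuous fun x : X => g • x := continuous_const_smul g
          have hc2 : Continuous fun x : X => g' (p g) • x := continuous_const_smul (g' (p g))
          exact (((hc1.dist continuous_const).sub (hc2.dist continuous_const)).abs).measurable.ennreal_ofReal
      _ ≤ ∑ _z ∈ Z, ENNReal.ofReal θ := by
          refine Finset.sum_le_sum fun z hz => ?_
          have hd : dist (Φ g ⟨z, hz⟩) (Φ (g' (p g)) ⟨z, hz⟩) ≤ dist (Φ g) (Φ (g' (p g))) :=
            dist_le_pi_dist _ _ _
          have hd2 : dist (Φ g ⟨z, hz⟩) (Φ (g' (p g)) ⟨z, hz⟩) ≤ θ := hd.trans (hp g)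
          exact aux_lintegral_abs_le μ g (g' (p g)) z θ F hF hd2
      _ = (Z.card : ℝ≥0∞) * ENNReal.ofReal θ := by
          rw [Finset.sum_const, nsmul_eq_mul]
      _ = ENNReal.ofReal (Z.card * θ) := by
          rw [← ENNReal.ofReal_natCast Z.card, ← ENNReal.ofReal_mul (Nat.cast_nonneg _)]
      _ = ENNReal.ofReal (ε₀ ^ 2 / 64) := by
          rw [hθdef, card_mul_theta_eq (Z.card : ℝ) (ε₀ ^ 2) (ne_of_gt hZcard)]
  -- the finite cover of X by D-balls of radius ε₀/8
  set U : X → Set X := fun q => {y | D q y < ε₀ / 8} with hU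
  have hUopen : ∀ q, IsOpen (U q) := by
    intro q
    refine isOpen_lt ?_ continuous_const
    exact continuous_finset_sum _ fun i _ =>
      (continuous_const.dist (continuous_const_smul (g' i)))
  have hUself : ∀ q : X, q ∈ U q := by
    intro q
    simp only [hU, Set.mem_setOf_eq, hD]
    have : ∀ i : Fin n, dist (g' i • q) (g' i • q) = 0 := fun i => dist_self _
    simp only [this, Finset.sum_const, smul_zero]
    positivity
  obtain ⟨P, hP⟩ := isCompact_univ.elim_finite_subcover U hUopen
    (fun x _ => Set.mem_iUnion.2 ⟨x, hUself x⟩)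
  -- the answer
  refine ⟨P.card, ?_⟩
  intro ρ hρ
  haveI := hρ
  -- the error functional
  set Ahat : X → ℝ≥0∞ := fun x => ∫⁻ g, ENNReal.ofReal (a x g) ∂ρ with hAhat
  have hAmeas : Measurable Ahat := by
    rw [hAhat]
    exact Measurable.lintegral_prod_right' (hameas.ennreal_ofReal)
  have hAint : ∫⁻ x, Ahat x ∂μ ≤ ENNReal.ofReal (ε₀ ^ 2 / 64) := by
    have hswap : ∫⁻ x, ∫⁻ g, ENNReal.ofReal (a x g) ∂ρ ∂μ
        = ∫⁻ g, ∫⁻ x, ENNReal.ofReal (a x g) ∂μ ∂ρ :=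
      lintegral_lintegral_swap (hameas.ennreal_ofReal.aemeasurable)
    rw [hAhat, hswap]
    calc ∫⁻ g, ∫⁻ x, ENNReal.ofReal (a x g) ∂μ ∂ρ
        ≤ ∫⁻ _g, ENNReal.ofReal (ε₀ ^ 2 / 64) ∂ρ := lintegral_mono fun g => hag g
      _ = ENNReal.ofReal (ε₀ ^ 2 / 64) := by rw [lintegral_const, measure_univ, mul_one]
  -- the good set B
  set B : Set X := {x | Ahat x < ENNReal.ofReal (ε₀ / 8)} with hB
  have hBmeas : MeasurableSet B := measurableSet_lt hAmeas measurable_const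
  have hBc : μ Bᶜ ≤ ENNReal.ofReal (ε₀ / 8) := by
    have hcompl : Bᶜ = {x | ENNReal.ofReal (ε₀ / 8) ≤ Ahat x} := by
      ext x
      simp [hB, not_lt]
    rw [hcompl]
    have hm := meas_ge_le_lintegral_div (μ := μ) hAmeas.aemeasurable
      (ε := ENNReal.ofReal (ε₀ / 8))
      (by simp [ENNReal.ofReal_eq_zero, not_le]; positivity) ENNReal.ofReal_ne_top
    refine hm.trans ?_
    calc (∫⁻ x, Ahat x ∂μ) / ENNReal.ofReal (ε₀ / 8)
        ≤ ENNReal.ofReal (ε₀ ^ 2 / 64) / ENNReal.ofReal (ε₀ / 8) := by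
          exact ENNReal.div_le_div_right hAint _
      _ = ENNReal.ofReal ((ε₀ ^ 2 / 64) / (ε₀ / 8)) :=
          (ENNReal.ofReal_div_of_pos (x := ε₀ ^ 2 / 64) (y := ε₀ / 8) (by positivity)).symm
      _ = ENNReal.ofReal (ε₀ / 8) := by
          rw [sq_div_div ε₀ (ne_of_gt hε₀)]
  -- the centers
  set cc : Fin P.card → X := fun k =>
    if h : (U (P.equivFin.symm k : X) ∩ B).Nonempty then h.choose else x₀ with hcc
  refine ⟨cc, ?_⟩
  -- B is covered
  have hBS : B ⊆ {y : X | ∃ k, (∫ g, dist (g • cc k) (g • y) ∂ρ) < ε} := by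
    intro y hy
    obtain ⟨q, hq, hyU⟩ := Set.mem_iUnion₂.1 (hP (Set.mem_univ y))
    set k : Fin P.card := P.equivFin ⟨q, hq⟩ with hk
    have hqk : (P.equivFin.symm k : X) = q := by rw [hk, Equiv.symm_apply_apply]
    have hne : (U (P.equivFin.symm k : X) ∩ B).Nonempty := by
      rw [hqk]; exact ⟨y, hyU, hy⟩
    have hcck : cc k = hne.choose := by rw [hcc]; exact dif_pos hne
    have hc : cc k ∈ U q ∩ B := by
      rw [hcck, ← hqk]; exact hne.choose_spec
    refine ⟨k, ?_⟩
    set c : X := cc k with hcdef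
    clear_value c
    have hcB : c ∈ B := hc.2
    have hDcy : D c y ≤ ε₀ / 4 := by
      have h1 : D c y ≤ D c q + D q y := hDtri c y q
      have h2 : D c q = D q c := hDsymm c q
      have h3 : D q c < ε₀ / 8 := hc.1
      have h4 : D q y < ε₀ / 8 := hyU
      linarith
    -- measurability of the sections of a
    have hsec : ∀ x : X, Measurable fun g : G => a x g := by
      intro x
      exact hameas.comp (measurable_prodMk_left (x := x))
    have hcontg : Continuous fun g : G => dist (g • c) (g • y) := by
      have hc1 : Continuous fun g : G => g • c :=
        continuous_smul.comp (continuous_id.prodMk continuous_const)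
      have hc2 : Continuous fun g : G => g • y :=
        continuous_smul.comp (continuous_id.prodMk continuous_const)
      exact hc1.dist hc2
    have h0 : ∫ g, dist (g • c) (g • y) ∂ρ
        = (∫⁻ g, ENNReal.ofReal (dist (g • c) (g • y)) ∂ρ).toReal :=
      integral_eq_lintegral_of_nonneg_ae (Filter.Eventually.of_forall fun g => dist_nonneg)
        hcontg.measurable.aestronglyMeasurable
    have h2 : ∫⁻ g, ENNReal.ofReal (dist (g • c) (g • y)) ∂ρ
        ≤ ENNReal.ofReal (D c y + 2 * η) + (Ahat c + Ahat y) := by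
      calc ∫⁻ g, ENNReal.ofReal (dist (g • c) (g • y)) ∂ρ
          ≤ ∫⁻ g, (ENNReal.ofReal (D c y + 2 * η)
              + (ENNReal.ofReal (a c g) + ENNReal.ofReal (a y g))) ∂ρ := by
            refine lintegral_mono fun g => ?_
            calc ENNReal.ofReal (dist (g • c) (g • y))
                ≤ ENNReal.ofReal ((D c y + 2 * η) + (a c g + a y g)) :=
                  ENNReal.ofReal_le_ofReal (hkey g c y)
              _ ≤ ENNReal.ofReal (D c y + 2 * η) + ENNReal.ofReal (a c g + a y g) :=
                  ENNReal.ofReal_add_le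
              _ ≤ ENNReal.ofReal (D c y + 2 * η)
                  + (ENNReal.ofReal (a c g) + ENNReal.ofReal (a y g)) := by
                  exact add_le_add le_rfl ENNReal.ofReal_add_le
        _ = ENNReal.ofReal (D c y + 2 * η) + (Ahat c + Ahat y) := by
            rw [lintegral_add_left measurable_const, lintegral_const, measure_univ, mul_one,
              lintegral_add_left ((hsec c).ennreal_ofReal)]
    have h3 : ∫⁻ g, ENNReal.ofReal (dist (g • c) (g • y)) ∂ρ
        ≤ ENNReal.ofReal (ε₀ / 4 + 2 * η + ε₀ / 8 + ε₀ / 8) := by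
      refine h2.trans ?_
      have hb1 : ENNReal.ofReal (D c y + 2 * η) ≤ ENNReal.ofReal (ε₀ / 4 + 2 * η) :=
        ENNReal.ofReal_le_ofReal (by linarith)
      have hb2 : Ahat c ≤ ENNReal.ofReal (ε₀ / 8) := le_of_lt hcB
      have hb3 : Ahat y ≤ ENNReal.ofReal (ε₀ / 8) := le_of_lt hy
      calc ENNReal.ofReal (D c y + 2 * η) + (Ahat c + Ahat y)
          ≤ ENNReal.ofReal (ε₀ / 4 + 2 * η)
            + (ENNReal.ofReal (ε₀ / 8) + ENNReal.ofReal (ε₀ / 8)) :=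
            add_le_add hb1 (add_le_add hb2 hb3)
        _ = ENNReal.ofReal (ε₀ / 4 + 2 * η + ε₀ / 8 + ε₀ / 8) := by
            rw [← ENNReal.ofReal_add (by positivity) (by positivity),
              ← ENNReal.ofReal_add (by positivity) (by positivity)]
            ring_nf
    have h4 : (∫⁻ g, ENNReal.ofReal (dist (g • c) (g • y)) ∂ρ).toReal
        ≤ ε₀ / 4 + 2 * η + ε₀ / 8 + ε₀ / 8 := by
      have := ENNReal.toReal_mono ENNReal.ofReal_ne_top h3
      rwa [ENNReal.toReal_ofReal (by positivity)] at this
    rw [h0]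
    have : ε₀ / 4 + 2 * η + ε₀ / 8 + ε₀ / 8 < ε := by
      rw [hηdef]
      have : ε₀ / 4 + 2 * (ε₀ / 16) + ε₀ / 8 + ε₀ / 8 = 5 * ε₀ / 8 := by ring
      rw [this]
      linarith
    linarith
  -- final measure estimate
  have hμS : μ {y : X | ∃ k, (∫ g, dist (g • cc k) (g • y) ∂ρ) < ε} ≥ μ B := measure_mono hBS
  have hμB : (1 : ℝ≥0∞) - ENNReal.ofReal (ε₀ / 8) ≤ μ B := by
    have hadd : μ B + μ Bᶜ = 1 := by
      rw [measure_add_measure_compl hBmeas, measure_univ]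
    have h1 : (1 : ℝ≥0∞) ≤ μ B + ENNReal.ofReal (ε₀ / 8) := by
      rw [← hadd]
      exact add_le_add le_rfl hBc
    exact tsub_le_iff_right.2 h1
  have hfinal : ENNReal.ofReal (1 - ε) < (1 : ℝ≥0∞) - ENNReal.ofReal (ε₀ / 8) := by
    have h1 : (1 : ℝ≥0∞) - ENNReal.ofReal (ε₀ / 8) = ENNReal.ofReal (1 - ε₀ / 8) := by
      rw [ENNReal.ofReal_sub 1 (by positivity), ENNReal.ofReal_one]
    rw [h1]
    rw [ENNReal.ofReal_lt_ofReal_iff (by linarith)]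
    linarith
  exact lt_of_lt_of_le hfinal (le_trans hμB hμS)
end

section
/- Let G be a locally compact amenable group with Haar measure m_G and Følner sequence {F_n}, acting continuously on a compact metric space X, and let μ be a G-invariant Borel probability measure. If μ has bounded mean-complexity along {F_n} (for every ε > 0 there is K(ε) with S_{m_G|_{F_n}}(X,μ,G,ε) < K(ε) for all n), then μ has bounded max-mean-complexity: for every ε > 0, S_{ρ_E}(X,μ,G,2√ε) ≤ K(ε) for every nonempty finite subset E of G. -/
open MeasureTheory Pointwise symmDiff Filter
open scoped ENNReal

set_option linter.unusedSectionVars false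
set_option linter.unusedVariables false

section helpers

/-- bounded continuous functions are integrable against finite measures -/
lemma my_integrable_of_bdd {α : Type*} [MeasurableSpace α] [TopologicalSpace α]
    [OpensMeasurableSpace α] (ν : Measure α) [IsFiniteMeasure ν] {f : α → ℝ}
    (hc : Continuous f) (h1 : ∀ x, |f x| ≤ 1) : Integrable f ν :=
  (integrable_const (1:ℝ)).mono' hc.aestronglyMeasurable
    (Filter.Eventually.of_forall fun x => by simpa using h1 x)

variable {G : Type*} [Group G] [TopologicalSpace G] [IsTopologicalGroup G]
    [MeasurableSpace G] [BorelSpace G]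

lemma my_translate_le (m : Measure G) [m.IsMulLeftInvariant] [IsFiniteMeasureOnCompacts m]
    {F : Set G} (hFc : IsCompact F) (h : G)
    {f : G → ℝ} (hf : Continuous f) (hf0 : ∀ g, 0 ≤ f g) (hf1 : ∀ g, f g ≤ 1) :
    ∫ g in F, f (h * g) ∂m ≤ (∫ g in F, f g ∂m) + (m ((h • F) ∆ F)).toReal := by
  have habs : ∀ g, |f g| ≤ 1 := fun g => abs_le.2 ⟨by linarith [hf0 g], hf1 g⟩
  have hhF : IsCompact (h • F) := by
    have := hFc.image (continuous_mul_left h)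
    simpa [← Set.image_smul, smul_eq_mul] using this
  have hFm : m F < ⊤ := hFc.measure_lt_top
  have hhFm : m (h • F) < ⊤ := hhF.measure_lt_top
  have hDm : m ((h • F) \ F) < ⊤ := lt_of_le_of_lt (measure_mono Set.diff_subset) hhFm
  -- change of variables
  let e : G ≃ᵐ G := (Homeomorph.mulLeft h).toMeasurableEquiv
  have hmp : MeasurePreserving e m m := by
    constructor
    · exact e.measurable
    · exact MeasureTheory.map_mul_left_eq_self m h
  have hpre : ∀ s : Set G, m (e ⁻¹' s) = m s := fun s =>
    hmp.measure_preimage_emb e.measurableEmbedding s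
  have hmapF : Measure.map e (m.restrict F) = m.restrict (h • F) := by
    ext t ht
    rw [Measure.map_apply e.measurable ht, Measure.restrict_apply (e.measurable ht),
      Measure.restrict_apply ht]
    have hFpre : e ⁻¹' (h • F) = F := by
      ext g
      simp only [Set.mem_preimage]
      show h * g ∈ h • F ↔ g ∈ F
      rw [show h * g = h • g from rfl]
      exact Set.smul_mem_smul_set_iff
    have : e ⁻¹' t ∩ F = e ⁻¹' (t ∩ h • F) := by
      rw [Set.preimage_inter, hFpre]
    rw [this, hpre]
  have hchg : ∫ g in F, f (h * g) ∂m = ∫ u in h • F, f u ∂m := by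
    have : ∫ u in h • F, f u ∂m = ∫ g, f (e g) ∂(m.restrict F) := by
      rw [← hmapF, integral_map_equiv]
    rw [this]; rfl
  rw [hchg]
  -- compare the two integrals
  haveI hfin1 : IsFiniteMeasure (m.restrict F) :=
    ⟨by rwa [Measure.restrict_apply_univ]⟩
  haveI hfin2 : IsFiniteMeasure (m.restrict ((h • F) \ F)) :=
    ⟨by rwa [Measure.restrict_apply_univ]⟩
  have hle : m.restrict (h • F) ≤ m.restrict F + m.restrict ((h • F) \ F) := by
    refine le_trans (Measure.restrict_mono ?_ le_rfl) (Measure.restrict_union_le _ _)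
    intro x hx
    by_cases hxF : x ∈ F
    · exact Or.inl hxF
    · exact Or.inr ⟨hx, hxF⟩
  have hint1 : Integrable f (m.restrict F) := my_integrable_of_bdd _ hf habs
  have hint2 : Integrable f (m.restrict ((h • F) \ F)) := my_integrable_of_bdd _ hf habs
  calc ∫ u in h • F, f u ∂m
      ≤ ∫ u, f u ∂(m.restrict F + m.restrict ((h • F) \ F)) := by
        refine integral_mono_measure hle ?_ ?_
        · exact Filter.Eventually.of_forall hf0
        · exact (integrable_add_measure).2 ⟨hint1, hint2⟩
    _ = (∫ u in F, f u ∂m) + ∫ u in (h • F) \ F, f u ∂m := integral_add_measure hint1 hint2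
    _ ≤ (∫ u in F, f u ∂m) + (m ((h • F) ∆ F)).toReal := by
        gcongr
        calc ∫ u in (h • F) \ F, f u ∂m ≤ ∫ _ in (h • F) \ F, (1:ℝ) ∂m :=
              integral_mono hint2 (integrable_const _) hf1
          _ = (m ((h • F) \ F)).toReal := by simp [setIntegral_const, measureReal_def]
          _ ≤ (m ((h • F) ∆ F)).toReal := by
              apply ENNReal.toReal_mono
              · refine (lt_of_le_of_lt (measure_mono (t := (h • F) ∪ F) ?_)
                  (lt_of_le_of_lt (measure_union_le _ _) ?_)).ne
                · rw [Set.symmDiff_def]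
                  exact Set.union_subset (Set.diff_subset.trans Set.subset_union_left)
                    (Set.diff_subset.trans Set.subset_union_right)
                · exact ENNReal.add_lt_top.2 ⟨hhFm, hFm⟩
              · exact measure_mono (by rw [Set.symmDiff_def]; exact Set.subset_union_left)

/-- the mean distance along a finite set `E` -/
noncomputable def meanD {G X : Type*} [Group G] [MulAction G X] [MetricSpace X]
    (E : Finset G) (x y : X) : ℝ :=
  (1 / (E.card : ℝ)) * ∑ h ∈ E, dist (h • x) (h • y)

/-- the min over `K` centers of the mean distance -/
noncomputable def phiD {G X : Type*} [Group G] [MulAction G X] [MetricSpace X]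
    (E : Finset G) {K : ℕ} (hK : 0 < K) (c : Fin K → X) (y : X) : ℝ :=
  (Finset.univ : Finset (Fin K)).inf' ⟨⟨0, hK⟩, Finset.mem_univ _⟩ fun k => meanD E (c k) y

section meanD

variable {G X : Type*} [Group G] [MulAction G X] [MetricSpace X] {E : Finset G}
  {K : ℕ} (hK : 0 < K)

lemma meanD_nonneg (x y : X) : 0 ≤ meanD E x y :=
  mul_nonneg (by positivity) (Finset.sum_nonneg fun h _ => dist_nonneg)

lemma meanD_le_one (hd : ∀ a b : X, dist a b ≤ 1) (x y : X) : meanD E x y ≤ 1 := by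
  rcases E.eq_empty_or_nonempty with hE | hE
  · simp [meanD, hE]
  · have hcard : (0:ℝ) < E.card := by exact_mod_cast hE.card_pos
    have hsum : ∑ h ∈ E, dist (h • x) (h • y) ≤ (E.card : ℝ) := by
      calc ∑ h ∈ E, dist (h • x) (h • y) ≤ ∑ _h ∈ E, (1:ℝ) :=
            Finset.sum_le_sum fun h _ => hd _ _
        _ = (E.card : ℝ) := by simp
    rw [meanD]
    calc (1 / (E.card : ℝ)) * ∑ h ∈ E, dist (h • x) (h • y)
        ≤ (1 / (E.card : ℝ)) * (E.card : ℝ) := by gcongr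
      _ = 1 := by field_simp

variable [TopologicalSpace G] [ContinuousSMul G X]

lemma meanD_continuous : Continuous fun p : X × X => meanD E p.1 p.2 := by
  unfold meanD
  exact continuous_const.mul (continuous_finset_sum _ fun h _ =>
    Continuous.dist (continuous_const.smul continuous_fst)
      (continuous_const.smul continuous_snd))

lemma phiD_le (c : Fin K → X) (y : X) (k : Fin K) : phiD E hK c y ≤ meanD E (c k) y :=
  Finset.inf'_le _ (Finset.mem_univ k)

lemma phiD_nonneg (c : Fin K → X) (y : X) : 0 ≤ phiD E hK c y :=
  Finset.le_inf' _ _ fun k _ => meanD_nonneg _ _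

lemma phiD_le_one (hd : ∀ a b : X, dist a b ≤ 1) (c : Fin K → X) (y : X) :
    phiD E hK c y ≤ 1 :=
  le_trans (phiD_le (E := E) hK c y ⟨0, hK⟩) (meanD_le_one hd _ _)

lemma phiD_exists_eq (c : Fin K → X) (y : X) :
    ∃ k, phiD E hK c y = meanD E (c k) y := by
  obtain ⟨k, -, hk⟩ := Finset.exists_mem_eq_inf' (α := ℝ)
    (⟨⟨0, hK⟩, Finset.mem_univ _⟩ : (Finset.univ : Finset (Fin K)).Nonempty)
    (fun k => meanD E (c k) y)
  exact ⟨k, hk⟩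

lemma phiD_continuous {α : Type*} [TopologicalSpace α] (f : Fin K → α → X) (g : α → X)
    (hf : ∀ k, Continuous (f k)) (hg : Continuous g) :
    Continuous fun a => phiD E hK (fun k => f k a) (g a) := by
  unfold phiD
  exact Continuous.finset_inf'_apply _ fun k _ =>
    meanD_continuous.comp ((hf k).prodMk hg)

end meanD

end helpers

set_option maxHeartbeats 1000000 in
/-- For a locally compact amenable group `G` with Haar measure `m` and Følner sequence
`F n` acting on a compact metric space `X` of diameter at most 1, preserving `μ`:
if for some `ε > 0` and `K`, for every `n` the space can be `(1−ε)`-covered by `K`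
balls of radius `ε` in the mean metric along `F n`, then for every nonempty finite
`E ⊆ G` the space can be `(1−2√ε)`-covered by `K` balls of radius `2√ε` in the mean
metric `d_{ρ_E}`.  (This is the statement `S_{ρ_E}(X,μ,G,2√ε) ≤ K(ε)`.) -/
theorem max_mean_complexity_of_mean_complexity_along_folner
    {G X : Type*} [Group G] [TopologicalSpace G] [IsTopologicalGroup G]
    [LocallyCompactSpace G] [MeasurableSpace G] [BorelSpace G]
    [MetricSpace X] [CompactSpace X] [MeasurableSpace X] [BorelSpace X]
    [MulAction G X] [ContinuousSMul G X]
    (m : Measure G) [m.IsHaarMeasure]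
    (F : ℕ → Set G) (hFc : ∀ n, IsCompact (F n))
    (hF0 : ∀ n, 0 < m (F n)) (hFfin : ∀ n, m (F n) < ⊤)
    (hFolner : ∀ g : G,
      Tendsto (fun n => m ((g • F n) ∆ F n) / m (F n)) atTop (nhds 0))
    (μ : Measure X) [IsProbabilityMeasure μ] [SMulInvariantMeasure G X μ]
    (hdiam : Metric.diam (Set.univ : Set X) ≤ 1)
    (ε : ℝ) (hε : 0 < ε) (K : ℕ)
    (hcomp : ∀ n : ℕ, ∃ c : Fin K → X,
      μ {y : X | ∃ k,
          (1 / (m (F n)).toReal) * (∫ g in F n, dist (g • c k) (g • y) ∂m) < ε}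
        > ENNReal.ofReal (1 - ε)) :
    ∀ E : Finset G, E.Nonempty →
      ∃ c : Fin K → X,
        μ {y : X | ∃ k,
            (1 / (E.card : ℝ)) * ∑ g ∈ E, dist (g • c k) (g • y) < 2 * Real.sqrt ε}
          > ENNReal.ofReal (1 - 2 * Real.sqrt ε) := by
  intro E hE
  -- basic facts
  have dist1 : ∀ a b : X, dist a b ≤ 1 := fun a b =>
    le_trans (Metric.dist_le_diam_of_mem isCompact_univ.isBounded (Set.mem_univ a)
      (Set.mem_univ b)) hdiam
  have hK : 0 < K := by
    rcases Nat.eq_zero_or_pos K with h0 | h; swap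
    · exact h
    · exfalso
      subst h0
      obtain ⟨c0, hc0⟩ := hcomp 0
      have : {y : X | ∃ k : Fin 0,
          (1 / (m (F 0)).toReal) * (∫ g in F 0, dist (g • c0 k) (g • y) ∂m) < ε} = ∅ :=
        Set.eq_empty_iff_forall_notMem.2 fun y ⟨k, _⟩ => k.elim0
      rw [this] at hc0
      simp at hc0
  haveI : Nonempty X := by
    by_contra h
    rw [not_nonempty_iff] at h
    have h1 : μ Set.univ = 1 := measure_univ
    rw [Set.univ_eq_empty_iff.2 h, measure_empty] at h1
    exact zero_ne_one h1
  have hsε : 0 < Real.sqrt ε := Real.sqrt_pos.2 hε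
  have hsq : Real.sqrt ε * Real.sqrt ε = ε := Real.mul_self_sqrt hε.le
  by_cases hbig : (4/9 : ℝ) ≤ ε
  · -- trivial case : 2√ε > 1
    have h23 : (2/3 : ℝ) ≤ Real.sqrt ε := by
      rw [show (2/3 : ℝ) = Real.sqrt ((2/3)^2) from (Real.sqrt_sq (by norm_num)).symm]
      exact Real.sqrt_le_sqrt (by norm_num; linarith)
    refine ⟨fun _ => Classical.arbitrary X, ?_⟩
    have huniv : {y : X | ∃ k : Fin K,
        (1 / (E.card : ℝ)) * ∑ g ∈ E, dist (g • (fun _ : Fin K => Classical.arbitrary X) k) (g • y)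
          < 2 * Real.sqrt ε} = Set.univ := by
      refine Set.eq_univ_iff_forall.2 fun y => ⟨⟨0, hK⟩, ?_⟩
      have : meanD E (Classical.arbitrary X) y ≤ 1 := meanD_le_one dist1 _ _
      have h2 : (1:ℝ) < 2 * Real.sqrt ε := by nlinarith
      calc (1 / (E.card : ℝ)) * ∑ g ∈ E, dist (g • Classical.arbitrary X) (g • y) ≤ 1 := this
        _ < 2 * Real.sqrt ε := h2
    rw [huniv, measure_univ]
    have : (1 : ℝ) - 2 * Real.sqrt ε < 0 := by nlinarith
    rw [ENNReal.ofReal_eq_zero.2 this.le]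
    exact zero_lt_one
  push_neg at hbig
  have hsε23 : Real.sqrt ε < 2/3 := by
    rw [show (2/3 : ℝ) = Real.sqrt ((2/3)^2) from (Real.sqrt_sq (by norm_num)).symm]
    exact Real.sqrt_lt_sqrt hε.le (by norm_num; linarith)
  -- pick a good Følner set
  have hEv : ∀ᶠ n in atTop, ∀ h ∈ E, m ((h • F n) ∆ F n) / m (F n) < ENNReal.ofReal ε :=
    (Filter.eventually_all_finset E).2 fun h _ =>
      (hFolner h).eventually_lt_const (ENNReal.ofReal_pos.2 hε)
  obtain ⟨n, hn⟩ := hEv.exists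
  obtain ⟨c, hc⟩ := hcomp n
  set M := (m (F n)).toReal with hMdef
  have hM : 0 < M := ENNReal.toReal_pos (hF0 n).ne' (hFfin n).ne
  have hFol : ∀ h ∈ E, (m ((h • F n) ∆ F n)).toReal ≤ ε * M := by
    intro h hh
    have h1 := hn h hh
    rw [ENNReal.div_lt_iff (Or.inl (hF0 n).ne') (Or.inl (hFfin n).ne)] at h1
    have hne : ENNReal.ofReal ε * m (F n) ≠ ⊤ :=
      ENNReal.mul_ne_top ENNReal.ofReal_ne_top (hFfin n).ne
    have h2 := ENNReal.toReal_mono hne h1.le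
    rwa [ENNReal.toReal_mul, ENNReal.toReal_ofReal hε.le] at h2
  haveI hfinF : IsFiniteMeasure (m.restrict (F n)) :=
    ⟨by rw [Measure.restrict_apply_univ]; exact hFfin n⟩
  have hcard0 : ((E.card : ℝ)) ≠ 0 := Nat.cast_ne_zero.2 hE.card_pos.ne'
  -- key translation estimate
  have key1 : ∀ x y : X, ∫ g in F n, meanD E (g • x) (g • y) ∂m ≤
      (∫ g in F n, dist (g • x) (g • y) ∂m) + ε * M := by
    intro x y
    have hfc : Continuous fun u : G => dist (u • x) (u • y) :=
      Continuous.dist (continuous_id.smul continuous_const)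
        (continuous_id.smul continuous_const)
    have hf0 : ∀ u : G, 0 ≤ dist (u • x) (u • y) := fun u => dist_nonneg
    have hf1 : ∀ u : G, dist (u • x) (u • y) ≤ 1 := fun u => dist1 _ _
    have hint : ∀ h : G, Integrable (fun g : G => dist ((h * g) • x) ((h * g) • y))
        (m.restrict (F n)) := by
      intro h
      refine my_integrable_of_bdd _ (hfc.comp (continuous_mul_left h)) fun u =>
        abs_le.2 ⟨by linarith [hf0 (h * u)], hf1 (h * u)⟩
    calc ∫ g in F n, meanD E (g • x) (g • y) ∂m
        = (1 / (E.card : ℝ)) * ∑ h ∈ E, ∫ g in F n, dist ((h * g) • x) ((h * g) • y) ∂m := by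
          unfold meanD
          simp_rw [smul_smul]
          rw [MeasureTheory.integral_const_mul, integral_finset_sum E fun h _ => hint h]
      _ ≤ (1 / (E.card : ℝ)) * ∑ h ∈ E,
            ((∫ g in F n, dist (g • x) (g • y) ∂m) + ε * M) := by
          refine mul_le_mul_of_nonneg_left ?_ (by positivity)
          refine Finset.sum_le_sum fun h hh => ?_
          calc ∫ g in F n, dist ((h * g) • x) ((h * g) • y) ∂m
              ≤ (∫ g in F n, dist (g • x) (g • y) ∂m) + (m ((h • F n) ∆ F n)).toReal :=
                my_translate_le m (hFc n) h hfc hf0 hf1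
            _ ≤ _ := by linarith [hFol h hh]
      _ = (∫ g in F n, dist (g • x) (g • y) ∂m) + ε * M := by
          rw [Finset.sum_const, nsmul_eq_mul]
          field_simp

  -- the good set A
  set A := {y : X | ∃ k, 1 / M * ∫ (g : G) in F n, dist (g • c k) (g • y) ∂m < ε} with hAdef
  have hAm : MeasurableSet A := by
    rw [hAdef, Set.setOf_exists]
    refine MeasurableSet.iUnion fun k => ?_
    have hsm : StronglyMeasurable fun y : X => ∫ g in F n, dist (g • c k) (g • y) ∂m := by
      exact StronglyMeasurable.integral_prod_left'
        (f := fun p : G × X => dist (p.1 • c k) (p.1 • p.2))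
        ((Continuous.dist (continuous_fst.smul continuous_const)
          (continuous_fst.smul continuous_snd)).stronglyMeasurable)
    exact measurableSet_lt (measurable_const.mul hsm.measurable) measurable_const
  have hcA : μ A > ENNReal.ofReal (1 - ε) := hc
  have hAgt : (μ A).toReal > 1 - ε := by
    show (1 - ε : ℝ) < (μ A).toReal
    rw [← ENNReal.ofReal_lt_iff_lt_toReal (by linarith) (measure_ne_top μ A)]
    exact hcA
  have hAc : (μ Aᶜ).toReal < ε := by
    have h1 : μ Aᶜ = 1 - μ A := prob_compl_eq_one_sub hAm
    have h2 : (μ Aᶜ).toReal = 1 - (μ A).toReal := by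
      rw [h1, ENNReal.toReal_sub_of_le prob_le_one ENNReal.one_ne_top, ENNReal.toReal_one]
    linarith
  -- the minimum function
  set Φ : G × X → ℝ := fun p => phiD E hK (fun k => p.1 • c k) (p.1 • p.2) with hPhidef
  have hPhicont : Continuous Φ := by
    rw [hPhidef]
    exact phiD_continuous hK (fun k => fun p : G × X => p.1 • c k) (fun p => p.1 • p.2)
      (fun k => continuous_fst.smul continuous_const) (continuous_fst.smul continuous_snd)
  have hPhi0 : ∀ p, 0 ≤ Φ p := fun p => phiD_nonneg (E := E) hK _ _
  have hPhi1 : ∀ p, Φ p ≤ 1 := fun p => phiD_le_one (E := E) hK dist1 _ _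
  have hPhiabs : ∀ p, |Φ p| ≤ 1 := fun p => abs_le.2 ⟨by linarith [hPhi0 p], hPhi1 p⟩
  set I : X → ℝ := fun y => ∫ g in F n, Φ (g, y) ∂m with hIdef
  have hPhig : ∀ y : X, Integrable (fun g => Φ (g, y)) (m.restrict (F n)) := fun y =>
    my_integrable_of_bdd _ (hPhicont.comp (continuous_id.prodMk continuous_const))
      fun g => hPhiabs _
  have hIub : ∀ y, I y ≤ M := by
    intro y
    calc I y ≤ ∫ _ in F n, (1:ℝ) ∂m :=
          integral_mono (hPhig y) (integrable_const _) fun g => hPhi1 _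
      _ = M := by simp only [setIntegral_const, smul_eq_mul, mul_one, measureReal_def, hMdef]
  have hI0 : ∀ y, 0 ≤ I y := fun y => integral_nonneg fun g => hPhi0 _
  have hIsm : StronglyMeasurable I := hPhicont.stronglyMeasurable.integral_prod_left'
  have hIint : Integrable I μ := by
    refine (integrable_const M).mono' hIsm.aestronglyMeasurable
      (Eventually.of_forall fun y => ?_)
    rw [Real.norm_eq_abs, abs_of_nonneg (hI0 y)]
    exact hIub y
  have hIA : ∀ y ∈ A, I y ≤ 2 * (ε * M) := by
    intro y hy
    obtain ⟨k, hk⟩ := hy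
    have hk' : ∫ g in F n, dist (g • c k) (g • y) ∂m < ε * M := by
      calc ∫ g in F n, dist (g • c k) (g • y) ∂m
          = M * (1 / M * ∫ g in F n, dist (g • c k) (g • y) ∂m) := by field_simp
        _ < M * ε := mul_lt_mul_of_pos_left hk hM
        _ = ε * M := mul_comm _ _
    calc I y ≤ ∫ g in F n, meanD E (g • c k) (g • y) ∂m := by
          refine integral_mono (hPhig y) ?_ fun g => phiD_le (E := E) hK _ _ k
          refine my_integrable_of_bdd _
            (meanD_continuous.comp ((continuous_id.smul continuous_const).prodMk
              (continuous_id.smul continuous_const))) fun g => ?_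
          exact abs_le.2 ⟨by linarith [meanD_nonneg (E := E) (g • c k) (g • y)],
            meanD_le_one dist1 _ _⟩
      _ ≤ (∫ g in F n, dist (g • c k) (g • y) ∂m) + ε * M := key1 (c k) y
      _ ≤ 2 * (ε * M) := by linarith
  have hsplit : ∫ y, I y ∂μ < 3 * (ε * M) := by
    have hμA1 : (μ A).toReal ≤ 1 := by
      simpa using ENNReal.toReal_mono ENNReal.one_ne_top (prob_le_one (μ := μ) (s := A))
    have hIA' : ∫ y in A, I y ∂μ ≤ 2 * (ε * M) := by
      calc ∫ y in A, I y ∂μ ≤ ∫ _ in A, 2 * (ε * M) ∂μ :=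
            setIntegral_mono_on hIint.integrableOn
              (integrableOn_const (measure_ne_top μ A)) hAm hIA
        _ = (μ A).toReal • (2 * (ε * M)) := setIntegral_const _
        _ ≤ 2 * (ε * M) := by
            rw [smul_eq_mul]
            exact mul_le_of_le_one_left (by positivity) hμA1
    have hIAc : ∫ y in Aᶜ, I y ∂μ < ε * M := by
      calc ∫ y in Aᶜ, I y ∂μ ≤ ∫ _ in Aᶜ, M ∂μ :=
            setIntegral_mono_on hIint.integrableOn
              (integrableOn_const (measure_ne_top μ Aᶜ)) hAm.compl
              fun y _ => hIub y
        _ = (μ Aᶜ).toReal • M := setIntegral_const _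
        _ < ε * M := by rw [smul_eq_mul]; exact mul_lt_mul_of_pos_right hAc hM
    have hadd := integral_add_compl hAm hIint
    linarith
  -- Fubini: find a good translate g₀
  have hexg : ∃ g₀ : G, ∫ y, Φ (g₀, y) ∂μ < 3 * ε := by
    by_contra hcon
    push_neg at hcon
    have hPhiint : Integrable (Function.uncurry fun g y => Φ (g, y))
        ((m.restrict (F n)).prod μ) :=
      my_integrable_of_bdd _ hPhicont hPhiabs
    have hswap : ∫ g in F n, (∫ y, Φ (g, y) ∂μ) ∂m = ∫ y, I y ∂μ :=
      integral_integral_swap hPhiint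
    have hint' : Integrable (fun g => ∫ y, Φ (g, y) ∂μ) (m.restrict (F n)) := by
      refine (integrable_const (1:ℝ)).mono'
        (hPhicont.stronglyMeasurable.integral_prod_right'.aestronglyMeasurable)
        (Eventually.of_forall fun g => ?_)
      calc ‖∫ y, Φ (g, y) ∂μ‖ ≤ 1 * (μ Set.univ).toReal :=
            norm_integral_le_of_norm_le_const
              (Eventually.of_forall fun y => by simpa using hPhiabs (g, y))
        _ = 1 := by simp
    have hlow : 3 * (ε * M) ≤ ∫ g in F n, (∫ y, Φ (g, y) ∂μ) ∂m := by
      calc (3:ℝ) * (ε * M) = (m (F n)).toReal • (3 * ε) := by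
            rw [smul_eq_mul, ← hMdef]; ring
        _ = ∫ _ in F n, 3 * ε ∂m := (setIntegral_const _).symm
        _ ≤ ∫ g in F n, (∫ y, Φ (g, y) ∂μ) ∂m :=
            integral_mono (integrable_const _) hint' fun g => hcon g
    rw [hswap] at hlow
    linarith
  obtain ⟨g₀, hg₀⟩ := hexg
  set ψ : X → ℝ := fun z => phiD E hK (fun k => g₀ • c k) z with hpsidef
  have hψcont : Continuous ψ := by
    rw [hpsidef]
    unfold phiD
    exact Continuous.finset_inf'_apply _ fun k _ =>
      meanD_continuous.comp (continuous_const.prodMk continuous_id)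
  have hψint : Integrable ψ μ :=
    my_integrable_of_bdd _ hψcont fun z => abs_le.2
      ⟨by linarith [phiD_nonneg (E := E) hK (fun k => g₀ • c k) z], phiD_le_one (E := E) hK dist1 _ _⟩
  have hψlt : ∫ z, ψ z ∂μ < 3 * ε := by
    have hcomp' : ∫ y, ψ (g₀ • y) ∂μ = ∫ z, ψ z ∂μ :=
      (measurePreserving_smul g₀ μ).integral_comp (measurableEmbedding_const_smul g₀) ψ
    rw [← hcomp']
    exact hg₀
  set B := {z : X | 2 * Real.sqrt ε ≤ ψ z} with hBdef
  have hBm : MeasurableSet B := (isClosed_le continuous_const hψcont).measurableSet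
  have hmk := mul_meas_ge_le_integral_of_nonneg
    (Eventually.of_forall fun z => phiD_nonneg (E := E) hK (fun k => g₀ • c k) z) hψint
    (2 * Real.sqrt ε)
  have hBlt : (μ B).toReal < (3/2) * Real.sqrt ε := by
    rw [measureReal_def] at hmk
    nlinarith [hmk, hψlt, hsε, hsq, ENNReal.toReal_nonneg (a := μ B)]
  have hBle : μ B ≤ ENNReal.ofReal ((3/2) * Real.sqrt ε) := by
    rw [← ENNReal.ofReal_toReal (measure_ne_top μ B)]
    exact ENNReal.ofReal_le_ofReal hBlt.le
  refine ⟨fun k => g₀ • c k, ?_⟩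
  have hsub : {z : X | ψ z < 2 * Real.sqrt ε} ⊆ {y : X | ∃ k : Fin K,
      (1 / (E.card : ℝ)) * ∑ g ∈ E, dist (g • (fun k => g₀ • c k) k) (g • y)
        < 2 * Real.sqrt ε} := by
    intro y hy
    obtain ⟨k, hk⟩ := phiD_exists_eq (E := E) hK (fun k => g₀ • c k) y
    refine ⟨k, ?_⟩
    show meanD E (g₀ • c k) y < 2 * Real.sqrt ε
    rw [← hk]
    exact hy
  have hcompl' : μ {z : X | ψ z < 2 * Real.sqrt ε} = 1 - μ B := by
    have hBc : {z : X | ψ z < 2 * Real.sqrt ε} = Bᶜ := by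
      ext z
      simp [hBdef, not_le]
    rw [hBc, prob_compl_eq_one_sub hBm]
  have hfinal : ENNReal.ofReal (1 - 2 * Real.sqrt ε) < 1 - μ B := by
    have h1 : (1:ℝ≥0∞) - ENNReal.ofReal ((3/2) * Real.sqrt ε)
        = ENNReal.ofReal (1 - (3/2) * Real.sqrt ε) := by
      rw [ENNReal.ofReal_sub _ (by positivity), ENNReal.ofReal_one]
    calc ENNReal.ofReal (1 - 2 * Real.sqrt ε)
        < ENNReal.ofReal (1 - (3/2) * Real.sqrt ε) := by
          rw [ENNReal.ofReal_lt_ofReal_iff (by nlinarith)]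
          nlinarith
      _ = 1 - ENNReal.ofReal ((3/2) * Real.sqrt ε) := h1.symm
      _ ≤ 1 - μ B := tsub_le_tsub_left hBle 1
  calc ENNReal.ofReal (1 - 2 * Real.sqrt ε) < 1 - μ B := hfinal
    _ = μ {z : X | ψ z < 2 * Real.sqrt ε} := hcompl'.symm
    _ ≤ μ _ := measure_mono hsub
end

section
/- Let G be a locally compact amenable group acting continuously on a compact metric space X with Følner sequence {F_n}, and let μ be a G-invariant Borel probability measure. If μ is equicontinuous in the mean along {F_n} (for every τ > 0 there is a compact Q with μ(Q) > 1−τ such that for every ε > 0 there is δ > 0 with x,y ∈ Q, d(x,y) < δ implying d_{m_G|_{F_n}}(x,y) < ε for all n), then μ has bounded mean-complexity along {F_n}: for every ε > 0 there is K such that S_{m_G|_{F_n}}(X,μ,G,ε) ≤ K for all n. -/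
open MeasureTheory Pointwise symmDiff Filter

/-- If a `G`-invariant measure `μ` is equicontinuous in the mean along a Følner sequence
`{F n}`, then `μ` has bounded mean-complexity along `{F n}`. -/
theorem bounded_mean_complexity_of_equicontinuous_in_mean
    {G X : Type*} [Group G] [TopologicalSpace G] [IsTopologicalGroup G]
    [LocallyCompactSpace G] [MeasurableSpace G] [BorelSpace G]
    [MetricSpace X] [CompactSpace X] [MeasurableSpace X] [BorelSpace X]
    [MulAction G X] [ContinuousSMul G X]
    (m : Measure G) [m.IsHaarMeasure]
    (F : ℕ → Set G) (hFc : ∀ n, IsCompact (F n))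
    (hF0 : ∀ n, 0 < m (F n)) (hFfin : ∀ n, m (F n) < ⊤)
    (hFolner : ∀ g : G,
      Tendsto (fun n => m ((g • F n) ∆ F n) / m (F n)) atTop (nhds 0))
    (μ : Measure X) [IsProbabilityMeasure μ] [SMulInvariantMeasure G X μ]
    (hequi : ∀ τ : ℝ, 0 < τ → ∃ Q : Set X, IsCompact Q ∧ μ Q > ENNReal.ofReal (1 - τ) ∧
      ∀ ε : ℝ, 0 < ε → ∃ δ : ℝ, 0 < δ ∧
        ∀ x ∈ Q, ∀ y ∈ Q, dist x y < δ → ∀ n : ℕ,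
          (1 / (m (F n)).toReal) * (∫ g in F n, dist (g • x) (g • y) ∂m) < ε) :
    ∀ ε : ℝ, 0 < ε → ∃ K : ℕ, ∀ n : ℕ,
      ∃ c : Fin K → X,
        μ {y : X | ∃ k,
            (1 / (m (F n)).toReal) * (∫ g in F n, dist (g • c k) (g • y) ∂m) < ε}
          > ENNReal.ofReal (1 - ε) := by
  intro ε hε
  obtain ⟨Q, hQc, hQμ, hQ⟩ := hequi ε hε
  obtain ⟨δ, hδ0, hδ⟩ := hQ ε hε
  -- cover Q by finitely many δ-balls centered in Q
  have hcov : Q ⊆ ⋃ x ∈ Q, Metric.ball x δ := fun x hx =>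
    Set.mem_biUnion hx (Metric.mem_ball_self hδ0)
  obtain ⟨s, hsQ, hsfin, hscov⟩ := hQc.elim_finite_subcover_image
    (fun x _ => Metric.isOpen_ball) hcov
  classical
  let t := hsfin.toFinset
  refine ⟨t.card, fun n => ?_⟩
  refine ⟨fun k => (t.equivFin.symm k : X), ?_⟩
  refine lt_of_lt_of_le hQμ (measure_mono ?_)
  intro y hy
  obtain ⟨x, hxs, hxy⟩ := Set.mem_iUnion₂.1 (hscov hy)
  have hxt : x ∈ t := hsfin.mem_toFinset.2 hxs
  refine ⟨t.equivFin ⟨x, hxt⟩, ?_⟩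
  show 1 / (m (F n)).toReal * ∫ g in F n,
      dist (g • (t.equivFin.symm (t.equivFin ⟨x, hxt⟩) : X)) (g • y) ∂m < ε
  rw [Equiv.symm_apply_apply]
  exact hδ x (hsQ hxs) y hy (by rwa [dist_comm]) n
end
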